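/- arXiv:2302.08633 — 4 statements merged into one kernel-verified Lean document; each statement's English description precedes it below -/
import Mathlib

section
/- Let $F_k$ be the free group on generators $a_1, \ldots, a_k$. Then the $\binom{k}{2}$ commutators $[a_i, a_j] = a_i a_j a_i^{-1} a_j^{-1}$ with $i < j$ generate a free subgroup of $F_k$ of rank $\binom{k}{2}$. -/
open scoped commutatorElement

open FreeGroup in
private lemma key {m : ℕ} {i j : Fin m} (hij : i ≠ j) (w : FreeGroup (Fin m))
    (hw : w.toWord.take 2 ≠ [(j,true),(i,true)]) :
    (⁅FreeGroup.of i, FreeGroup.of j⁆ * w).toWord.take 2 = [(i,true),(j,true)] := by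
  have hc : ⁅FreeGroup.of i, FreeGroup.of j⁆ * w
      = FreeGroup.mk ((i,true)::(j,true)::(i,false)::(j,false)::w.toWord) := by
    conv_lhs => rw [← mk_toWord (x := w)]
    rfl
  rw [hc, toWord_mk]
  have red : reduce w.toWord = w.toWord := reduce_toWord w
  generalize hL : w.toWord = L at red hw
  clear hc hL
  rcases L with _ | ⟨⟨a, b⟩, L⟩
  · simp [reduce, hij, Ne.symm hij]
  · by_cases h1 : a = j ∧ b = true
    · obtain ⟨ha, rfl⟩ := h1
      subst ha
      rcases L with _ | ⟨⟨a2, b2⟩, L2⟩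
      · have r1 : reduce [((a:Fin m),false),(a,true)] = [] := by simp [reduce]
        rw [reduce.cons, reduce.cons, reduce.cons, r1]
        simp [hij, Ne.symm hij]
      · have h2 : ¬(a2 = i ∧ b2 = true) := by
          rintro ⟨rfl, rfl⟩; exact hw rfl
        have r1 : reduce ((a,false)::(a,true)::(a2,b2)::L2) = (a2,b2)::L2 := by
          rw [reduce.cons, red]; simp
        rw [reduce.cons, reduce.cons, reduce.cons, r1]
        have h2' : ¬(i = a2 ∧ b2 = true) := fun ⟨h, h'⟩ => h2 ⟨h.symm, h'⟩
        simp [h2', hij, Ne.symm hij]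
    · have h1' : ¬(j = a ∧ b = true) := fun ⟨h, h'⟩ => h1 ⟨h.symm, h'⟩
      have r1 : reduce ((j,false)::(a,b)::L) = (j,false)::(a,b)::L := by
        rw [reduce.cons, red]
        simp [h1']
      rw [reduce.cons, reduce.cons, reduce.cons, r1]
      simp [hij, Ne.symm hij]

open FreeGroup in
private lemma inj_comm (m : ℕ) [Nontrivial {p : Fin m × Fin m // p.1 < p.2}] :
    Function.Injective
      (FreeGroup.lift (fun p : {p : Fin m × Fin m // p.1 < p.2} =>
        ⁅FreeGroup.of p.1.1, FreeGroup.of p.1.2⁆) :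
        FreeGroup {p : Fin m × Fin m // p.1 < p.2} →* FreeGroup (Fin m)) := by
  apply FreeGroup.injective_lift_of_ping_pong _
    (X := fun s => {w : FreeGroup (Fin m) | w.toWord.take 2 = [(s.1.1,true),(s.1.2,true)]})
    (Y := fun s => {w : FreeGroup (Fin m) | w.toWord.take 2 = [(s.1.2,true),(s.1.1,true)]})
  · -- nonempty
    intro s
    refine ⟨FreeGroup.mk [(s.1.1,true),(s.1.2,true)], ?_⟩
    simp [toWord_mk, reduce]
  · -- X disjoint
    intro s t hst
    rw [Function.onFun, Set.disjoint_left]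
    intro w hw hw'
    apply hst
    simp only [Set.mem_setOf_eq] at hw hw'
    rw [hw] at hw'
    simp only [List.cons.injEq, Prod.mk.injEq, and_true] at hw'
    exact Subtype.ext (Prod.ext hw'.1 hw'.2)
  · -- Y disjoint
    intro s t hst
    rw [Function.onFun, Set.disjoint_left]
    intro w hw hw'
    apply hst
    simp only [Set.mem_setOf_eq] at hw hw'
    rw [hw] at hw'
    simp only [List.cons.injEq, Prod.mk.injEq, and_true] at hw'
    exact Subtype.ext (Prod.ext hw'.2 hw'.1)
  · -- X Y disjoint
    intro s t
    rw [Set.disjoint_left]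
    intro w hw hw'
    simp only [Set.mem_setOf_eq] at hw hw'
    rw [hw] at hw'
    simp only [List.cons.injEq, Prod.mk.injEq, and_true] at hw'
    have h1 : (↑t : Fin m × Fin m).2 < (↑t : Fin m × Fin m).1 := by
      rw [← hw'.1, ← hw'.2]; exact s.2
    exact absurd t.2 (not_lt_of_gt h1)
  · -- hX
    rintro s x ⟨w, hw, rfl⟩
    simp only [Set.mem_compl_iff, Set.mem_setOf_eq] at hw
    simp only [smul_eq_mul, Set.mem_setOf_eq]
    exact key (ne_of_lt s.2) w hw
  · -- hY
    rintro s x ⟨w, hw, rfl⟩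
    simp only [Set.mem_compl_iff, Set.mem_setOf_eq] at hw
    simp only [Pi.inv_apply, commutatorElement_inv, smul_eq_mul, Set.mem_setOf_eq]
    exact key (ne_of_gt s.2) w hw

/-- The `k.choose 2` commutators `⁅aᵢ, aⱼ⁆` with `i < j` of the generators of the
free group on `k` generators freely generate a free subgroup of rank `k.choose 2`. -/
theorem stmt_0 (k : ℕ) :
    Nat.card {p : Fin k × Fin k // p.1 < p.2} = k.choose 2 ∧
    Function.Injective
      (FreeGroup.lift (fun p : {p : Fin k × Fin k // p.1 < p.2} =>
        ⁅FreeGroup.of p.1.1, FreeGroup.of p.1.2⁆) :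
        FreeGroup {p : Fin k × Fin k // p.1 < p.2} →* FreeGroup (Fin k)) := by
  constructor
  · -- cardinality
    have e : {p : Fin k × Fin k // p.1 < p.2} ≃ (Σ j : Fin k, Fin j.1) :=
      { toFun := fun p => ⟨p.1.2, ⟨p.1.1, p.2⟩⟩
        invFun := fun x => ⟨(⟨x.2.1, x.2.2.trans x.1.2⟩, x.1), x.2.2⟩
        left_inv := fun p => by ext <;> rfl
        right_inv := fun x => by ext <;> rfl }
    rw [Nat.card_congr e, Nat.card_eq_fintype_card, Fintype.card_sigma]
    simp only [Fintype.card_fin]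
    rw [Fin.sum_univ_eq_sum_range (fun i => (i : ℕ)) k, Nat.choose_two_right]
    have h := Finset.sum_range_id_mul_two k
    omega
  · -- injectivity
    rcases le_or_gt k 1 with hk | hk
    · haveI : IsEmpty {p : Fin k × Fin k // p.1 < p.2} := ⟨fun p => by
        have h1 := p.1.1.2
        have h2 := p.1.2.2
        have h3 := p.2
        rw [Fin.lt_def] at h3
        omega⟩
      intro x y _
      exact Subsingleton.elim x y
    · haveI : Nontrivial {p : Fin (k+1) × Fin (k+1) // p.1 < p.2} :=
        ⟨⟨(⟨0, by omega⟩, ⟨1, by omega⟩), Fin.mk_lt_mk.mpr (by omega)⟩,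
         ⟨(⟨0, by omega⟩, ⟨2, by omega⟩), Fin.mk_lt_mk.mpr (by omega)⟩,
         by intro h; simp [Subtype.ext_iff, Prod.ext_iff, Fin.ext_iff] at h⟩
      set e : Fin k → Fin (k+1) := Fin.castSucc with he
      set ψ : {p : Fin k × Fin k // p.1 < p.2} → {p : Fin (k+1) × Fin (k+1) // p.1 < p.2} :=
        fun p => ⟨(e p.1.1, e p.1.2), Fin.castSucc_lt_castSucc_iff.mpr p.2⟩ with hψdef
      have hψ : Function.Injective ψ := by
        intro p q h
        simp only [hψdef, Subtype.ext_iff, Prod.ext_iff, he] at h ⊢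
        exact ⟨Fin.castSucc_injective k h.1, Fin.castSucc_injective k h.2⟩
      haveI : Nonempty {p : Fin k × Fin k // p.1 < p.2} :=
        ⟨⟨(⟨0, by omega⟩, ⟨1, by omega⟩), Fin.mk_lt_mk.mpr (by omega)⟩⟩
      have hmapψ : Function.Injective (FreeGroup.map ψ) := by
        have hli := Function.leftInverse_invFun hψ
        intro x y hxy
        have h2 : FreeGroup.map (Function.invFun ψ) (FreeGroup.map ψ x)
            = FreeGroup.map (Function.invFun ψ) (FreeGroup.map ψ y) := by rw [hxy]
        rwa [FreeGroup.map.comp, FreeGroup.map.comp,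
          (funext hli : Function.invFun ψ ∘ ψ = id), FreeGroup.map.id, FreeGroup.map.id] at h2
      have hsq : (FreeGroup.lift (fun p : {p : Fin (k+1) × Fin (k+1) // p.1 < p.2} =>
            ⁅FreeGroup.of p.1.1, FreeGroup.of p.1.2⁆)).comp (FreeGroup.map ψ)
          = (FreeGroup.map e).comp (FreeGroup.lift (fun p : {p : Fin k × Fin k // p.1 < p.2} =>
            ⁅FreeGroup.of p.1.1, FreeGroup.of p.1.2⁆)) := by
        apply FreeGroup.ext_hom
        intro s
        simp [FreeGroup.map.of, map_commutatorElement, hψdef]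
      have hcomp : Function.Injective ((FreeGroup.map e).comp (FreeGroup.lift
          (fun p : {p : Fin k × Fin k // p.1 < p.2} =>
            ⁅FreeGroup.of p.1.1, FreeGroup.of p.1.2⁆))) := by
        rw [← hsq]
        rw [MonoidHom.coe_comp]
        exact (inj_comm (k+1)).comp hmapψ
      rw [MonoidHom.coe_comp] at hcomp
      exact Function.Injective.of_comp hcomp
end

section
/- In the free group $F_k$ on generators $a_1,\ldots,a_k$, any nonempty reduced word in the commutators $[a_{i_1},a_{j_1}]\cdots[a_{i_N},a_{j_N}]$ (where each $i_l \neq j_l$, and for each $l$ either $a_{i_l} \neq a_{j_{l+1}}$ or $a_{j_l} \neq a_{i_{l+1}}$) is a nontrivial element of $F_k$; moreover its reduced word length in the generators $a_\bullet$ is at least $2N+2$. -/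
open FreeGroup
open scoped commutatorElement

private lemma reduce_eq_self_of_chain' {α : Type*} [DecidableEq α] (L : List (α × Bool))
    (h : List.Chain' (fun a b : α × Bool => a.1 ≠ b.1 ∨ a.2 = b.2) L) :
    FreeGroup.reduce L = L := by
  rcases (Relation.ReflTransGen.cases_head (FreeGroup.reduce.red (L := L))) with heq | ⟨L', hstep, _⟩
  · exact heq.symm
  · exfalso
    cases hstep with
    | @not L₁ L₂ x b =>
      have h2 := (List.isChain_append.mp h).2.1
      have := (List.isChain_cons_cons.mp h2).1
      rcases this with h' | h'
      · exact h' rfl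
      · simp at h'

private lemma mk_single_inv {α : Type*} (x : α) :
    FreeGroup.mk [(x, false)] = (FreeGroup.of x)⁻¹ := by
  rw [show FreeGroup.of x = FreeGroup.mk [(x, true)] from rfl, FreeGroup.inv_mk]
  rfl

private lemma comm_mk {k : ℕ} (a b : Fin k) :
    ⁅FreeGroup.of a, FreeGroup.of b⁆ =
      FreeGroup.mk [(a, true), (b, true), (a, false), (b, false)] := by
  rw [commutatorElement_def]
  rw [show FreeGroup.of a = FreeGroup.mk [(a, true)] from rfl,
    show FreeGroup.of b = FreeGroup.mk [(b, true)] from rfl,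
    FreeGroup.inv_mk, FreeGroup.inv_mk, FreeGroup.mul_mk, FreeGroup.mul_mk, FreeGroup.mul_mk]
  rfl

private lemma key_s1 {k : ℕ} :
    ∀ (l : List (Fin k × Fin k)) (a b : Fin k), a ≠ b →
    (∀ p ∈ l, p.1 ≠ p.2) →
    List.Chain' (fun p q : Fin k × Fin k => p.1 ≠ q.2 ∨ p.2 ≠ q.1) ((a, b) :: l) →
    ∃ w : List (Fin k × Bool),
      (((a, b) :: l).map (fun p => ⁅FreeGroup.of p.1, FreeGroup.of p.2⁆)).prod
        = FreeGroup.mk ((a, true) :: (b, true) :: w) ∧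
      List.Chain' (fun x y : Fin k × Bool => x.1 ≠ y.1 ∨ x.2 = y.2)
        ((a, true) :: (b, true) :: w) ∧
      2 * l.length + 2 ≤ w.length := by
  intro l
  induction l with
  | nil =>
    intro a b hab _ _
    refine ⟨[(a, false), (b, false)], ?_, ?_, by simp⟩
    · simp [comm_mk]
    · refine List.isChain_cons_cons.mpr ⟨Or.inl hab, ?_⟩
      refine List.isChain_cons_cons.mpr ⟨Or.inl (Ne.symm hab), ?_⟩
      refine List.isChain_cons_cons.mpr ⟨Or.inl hab, ?_⟩
      simp
  | cons p t ih =>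
    obtain ⟨a', b'⟩ := p
    intro a b hab hmem hchain
    have hab' : a' ≠ b' := hmem (a', b') (by simp)
    have hjun : a ≠ b' ∨ b ≠ a' := (List.isChain_cons_cons.mp hchain).1
    have hchain' : List.Chain' (fun p q : Fin k × Fin k => p.1 ≠ q.2 ∨ p.2 ≠ q.1)
        ((a', b') :: t) := (List.isChain_cons_cons.mp hchain).2
    obtain ⟨w, hw, hwc, hwl⟩ := ih a' b' hab' (fun q hq => hmem q (by simp [hq])) hchain'
    have hprod : (((a, b) :: (a', b') :: t).map
        (fun p => ⁅FreeGroup.of p.1, FreeGroup.of p.2⁆)).prod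
        = ⁅FreeGroup.of a, FreeGroup.of b⁆ * FreeGroup.mk ((a', true) :: (b', true) :: w) := by
      rw [List.map_cons, List.prod_cons, hw]
    by_cases hba' : b = a'
    · -- one cancellation
      have hab'' : a ≠ b' := by
        rcases hjun with h | h
        · exact h
        · exact absurd hba' h
      refine ⟨(a, false) :: (b', true) :: w, ?_, ?_, ?_⟩
      · rw [hprod, commutatorElement_def, ← hba']
        rw [show FreeGroup.mk ((b, true) :: (b', true) :: w)
            = FreeGroup.of b * FreeGroup.mk ((b', true) :: w) from
          by rw [show FreeGroup.of b = FreeGroup.mk [(b, true)] from rfl, FreeGroup.mul_mk]; rfl]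
        rw [show FreeGroup.of a * FreeGroup.of b * (FreeGroup.of a)⁻¹ * (FreeGroup.of b)⁻¹ *
            (FreeGroup.of b * FreeGroup.mk ((b', true) :: w))
            = FreeGroup.of a * FreeGroup.of b * (FreeGroup.of a)⁻¹ *
              FreeGroup.mk ((b', true) :: w) from by group]
        rw [show FreeGroup.of a = FreeGroup.mk [(a, true)] from rfl,
          show FreeGroup.of b = FreeGroup.mk [(b, true)] from rfl,
          FreeGroup.inv_mk, FreeGroup.mul_mk, FreeGroup.mul_mk, FreeGroup.mul_mk]
        rfl
      · refine List.isChain_cons_cons.mpr ⟨Or.inl hab, ?_⟩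
        refine List.isChain_cons_cons.mpr ⟨Or.inl (Ne.symm hab), ?_⟩
        refine List.isChain_cons_cons.mpr ⟨Or.inl hab'', ?_⟩
        exact (List.isChain_cons_cons.mp hwc).2
      · simp only [List.length_cons]
        omega
    · -- no cancellation
      refine ⟨(a, false) :: (b, false) :: (a', true) :: (b', true) :: w, ?_, ?_, ?_⟩
      · rw [hprod, comm_mk, FreeGroup.mul_mk]
        rfl
      · refine List.isChain_cons_cons.mpr ⟨Or.inl hab, ?_⟩
        refine List.isChain_cons_cons.mpr ⟨Or.inl (Ne.symm hab), ?_⟩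
        refine List.isChain_cons_cons.mpr ⟨Or.inr rfl, ?_⟩
        refine List.isChain_cons_cons.mpr ⟨Or.inl hba', ?_⟩
        exact hwc
      · simp only [List.length_cons]
        omega

/-- Any product of commutators of generators of the free group on `k` generators,
with `i l ≠ j l` and no obvious cancellation between consecutive commutators, is a
nontrivial element whose reduced word length is at least `2 N + 2`. -/
theorem stmt_1 (k N : ℕ) (hN : 0 < N) (i j : Fin N → Fin k)
    (hij : ∀ l, i l ≠ j l)
    (hcons : ∀ (l : Fin N) (hl : (l : ℕ) + 1 < N),
      i l ≠ j ⟨(l : ℕ) + 1, hl⟩ ∨ j l ≠ i ⟨(l : ℕ) + 1, hl⟩) :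
    (List.ofFn (fun l : Fin N =>
        ⁅FreeGroup.of (i l), FreeGroup.of (j l)⁆)).prod ≠ 1 ∧
    2 * N + 2 ≤ ((List.ofFn (fun l : Fin N =>
        ⁅FreeGroup.of (i l), FreeGroup.of (j l)⁆)).prod).toWord.length := by
  obtain ⟨N', rfl⟩ : ∃ N', N = N' + 1 := ⟨N - 1, by omega⟩
  have hofn : List.ofFn (fun l : Fin (N' + 1) => ⁅FreeGroup.of (i l), FreeGroup.of (j l)⁆)
      = ((List.ofFn (fun l : Fin (N' + 1) => (i l, j l))).map
          (fun p => ⁅FreeGroup.of p.1, FreeGroup.of p.2⁆)) := by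
    rw [List.map_ofFn]; rfl
  have hc : List.Chain' (fun p q : Fin k × Fin k => p.1 ≠ q.2 ∨ p.2 ≠ q.1)
      (List.ofFn (fun l : Fin (N' + 1) => (i l, j l))) := by
    refine List.isChain_ofFn.mpr ?_
    intro l hl
    exact hcons ⟨l, by omega⟩ hl
  have hmem : ∀ p ∈ (List.ofFn (fun l : Fin (N' + 1) => (i l, j l))), p.1 ≠ p.2 := by
    intro p hp
    rw [List.mem_ofFn] at hp
    obtain ⟨l, rfl⟩ := hp
    exact hij l
  rw [List.ofFn_succ] at hc hmem
  obtain ⟨w, hw, hwc, hwl⟩ := key_s1 (List.ofFn (fun l : Fin N' => (i l.succ, j l.succ)))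
    (i 0) (j 0) (hij 0) (fun p hp => hmem p (by simp [hp])) hc
  have hW : (List.ofFn (fun l : Fin (N' + 1) =>
      ⁅FreeGroup.of (i l), FreeGroup.of (j l)⁆)).prod
      = FreeGroup.mk ((i 0, true) :: (j 0, true) :: w) := by
    rw [hofn, List.ofFn_succ, hw]
  have hword : ((List.ofFn (fun l : Fin (N' + 1) =>
      ⁅FreeGroup.of (i l), FreeGroup.of (j l)⁆)).prod).toWord
      = (i 0, true) :: (j 0, true) :: w := by
    rw [hW, FreeGroup.toWord_mk, reduce_eq_self_of_chain' _ hwc]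
  constructor
  · intro h
    rw [h, FreeGroup.toWord_one] at hword
    exact List.cons_ne_nil _ _ hword.symm
  · rw [hword]
    simp only [List.length_cons, List.length_ofFn] at hwl ⊢
    omega
end

section
/- Let $0 < r, \delta, \tau < 1$ with $4\delta + \tau < r$, and let $f, g : B_0(r) \to \mathbb{C}^d$ be injective holomorphic maps with $\|f - \mathrm{id}\|_{C^0(B_0(r))} \leq \delta$ and $\|g - \mathrm{id}\|_{C^0(B_0(r))} \leq \delta$. Then the commutator $[f,g] = f \circ g \circ f^{-1} \circ g^{-1}$ is well-defined on the ball $B_0(r - 4\delta - \tau)$ and satisfies $\|[f,g] - \mathrm{id}\|_{C^0(B_0(r-4\delta-\tau))} \leq \frac{2}{\tau}\|f - \mathrm{id}\|_{C^0(B_0(r))}\|g - \mathrm{id}\|_{C^0(B_0(r))}$. -/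
open Metric
open scoped NNReal

/-- Cauchy estimate: a bounded holomorphic map on a ball has bounded derivative
on a smaller ball. -/
lemma aux_fderiv_bound {E : Type*} [NormedAddCommGroup E] [NormedSpace ℂ E] [CompleteSpace E]
    {r s M : ℝ} (hs : 0 < s) {u : E → E}
    (hu : DifferentiableOn ℂ u (ball 0 r)) (hM : ∀ z ∈ ball (0 : E) r, ‖u z‖ ≤ M)
    {v : E} (hv : v ∈ ball (0 : E) (r - s)) : ‖fderiv ℂ u v‖ ≤ M / s := by
  rw [mem_ball_zero_iff] at hv
  have hvr : v ∈ ball (0 : E) r := by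
    rw [mem_ball_zero_iff]; linarith
  have hM0 : 0 ≤ M := (norm_nonneg _).trans (hM v hvr)
  refine ContinuousLinearMap.opNorm_le_bound _ (div_nonneg hM0 hs.le) fun e => ?_
  rcases eq_or_ne e 0 with rfl | he
  · simp
  have he0 : 0 < ‖e‖ := norm_pos_iff.mpr he
  set ρ : ℝ := s / ‖e‖ with hρ
  have hρ0 : 0 < ρ := div_pos hs he0
  set φ : ℂ → E := fun t => u (v + t • e) with hφ
  have hmem : ∀ t : ℂ, ‖t‖ ≤ ρ → v + t • e ∈ ball (0 : E) r := by
    intro t ht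
    rw [mem_ball_zero_iff]
    calc ‖v + t • e‖ ≤ ‖v‖ + ‖t • e‖ := norm_add_le _ _
      _ ≤ ‖v‖ + ρ * ‖e‖ := by
          rw [norm_smul]
          nlinarith [ht, he0]
      _ = ‖v‖ + s := by rw [hρ, div_mul_cancel₀ _ he0.ne']
      _ < r := by linarith
  have hdiffAt : ∀ t : ℂ, ‖t‖ ≤ ρ → DifferentiableAt ℂ φ t := by
    intro t ht
    have h1 : DifferentiableAt ℂ u (v + t • e) :=
      hu.differentiableAt (isOpen_ball.mem_nhds (hmem t ht))
    have h2 : DifferentiableAt ℂ (fun t : ℂ => v + t • e) t := by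
      apply DifferentiableAt.const_add
      exact (differentiable_id.smul_const e).differentiableAt
    exact h1.comp t h2
  have hdc : DiffContOnCl ℂ φ (ball 0 ρ) := by
    have : DifferentiableOn ℂ φ (closedBall 0 ρ) := fun t ht =>
      (hdiffAt t (mem_closedBall_zero_iff.mp ht)).differentiableWithinAt
    have hcl : closure (ball (0:ℂ) ρ) = closedBall 0 ρ := closure_ball _ hρ0.ne'
    have hdO : DifferentiableOn ℂ φ (closure (ball (0:ℂ) ρ)) := hcl ▸ this
    exact hdO.diffContOnCl
  have hderiv : HasDerivAt φ (fderiv ℂ u v e) 0 := by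
    have h1 : DifferentiableAt ℂ u (v + (0:ℂ) • e) := by
      simpa using hu.differentiableAt (isOpen_ball.mem_nhds hvr)
    have h2 : HasDerivAt (fun t : ℂ => v + t • e) e 0 := by
      simpa using ((hasDerivAt_id (0:ℂ)).smul_const e).const_add v
    have := h1.hasFDerivAt.comp_hasDerivAt 0 h2
    simpa [hφ, Function.comp_def] using this
  have hsup : ∀ t ∈ sphere (0 : ℂ) ρ, ‖φ t‖ ≤ M := by
    intro t ht
    exact hM _ (hmem t (mem_sphere_zero_iff_norm.mp ht).le)
  have := Complex.norm_deriv_le_of_forall_mem_sphere_norm_le hρ0 hdc hsup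
  rw [hderiv.deriv] at this
  calc ‖fderiv ℂ u v e‖ ≤ M / ρ := this
    _ = M / s * ‖e‖ := by rw [hρ, div_div_eq_mul_div, div_mul_eq_mul_div]

/-- Lipschitz estimate for a bounded holomorphic map on a smaller ball. -/
lemma aux_lip {E : Type*} [NormedAddCommGroup E] [NormedSpace ℂ E] [CompleteSpace E]
    {r s M : ℝ} (hs : 0 < s) {u : E → E}
    (hu : DifferentiableOn ℂ u (ball 0 r)) (hM : ∀ z ∈ ball (0 : E) r, ‖u z‖ ≤ M)
    {x y : E} (hx : x ∈ ball (0 : E) (r - s)) (hy : y ∈ ball (0 : E) (r - s)) :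
    ‖u y - u x‖ ≤ M / s * ‖y - x‖ := by
  have hsub : ball (0 : E) (r - s) ⊆ ball (0 : E) r := by
    apply ball_subset_ball; linarith
  exact Convex.norm_image_sub_le_of_norm_fderiv_le
    (fun w hw => hu.differentiableAt (isOpen_ball.mem_nhds (hsub hw)))
    (fun w hw => aux_fderiv_bound hs hu hM hw) (convex_ball _ _) hx hy

/-- Surjectivity of a holomorphic perturbation of the identity, via the Banach
fixed point theorem. -/
lemma aux_surj {E : Type*} [NormedAddCommGroup E] [NormedSpace ℂ E] [CompleteSpace E]
    {r δ dg : ℝ} (hδ0 : 0 < δ) {g : E → E}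
    (hg : DifferentiableOn ℂ g (ball 0 r))
    (hgδ : ∀ z ∈ ball (0 : E) r, ‖g z - z‖ ≤ dg) (hdg : dg ≤ δ)
    {z : E} (hz : ‖z‖ + δ < r - 2 * δ) :
    ∃ w, ‖w - z‖ ≤ dg ∧ g w = z := by
  have hr0 : 0 < r := by have := norm_nonneg z; linarith
  have hdg0 : 0 ≤ dg := (norm_nonneg _).trans (hgδ 0 (mem_ball_self hr0))
  set G : E → E := fun w => g w - w with hG
  have hGdiff : DifferentiableOn ℂ G (ball 0 r) := hg.sub differentiableOn_id
  have hGb : ∀ w ∈ ball (0 : E) r, ‖G w‖ ≤ dg := hgδ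
  set S : Set E := closedBall z dg with hS
  have hSsub : S ⊆ ball (0 : E) (r - 2 * δ) := by
    intro w hw
    rw [mem_ball_zero_iff]
    have h1 : ‖w - z‖ ≤ dg := mem_closedBall_iff_norm.mp hw
    calc ‖w‖ = ‖(w - z) + z‖ := by rw [sub_add_cancel]
      _ ≤ ‖w - z‖ + ‖z‖ := norm_add_le _ _
      _ < r - 2 * δ := by linarith
  have hSr : S ⊆ ball (0 : E) r := hSsub.trans (ball_subset_ball (by linarith))
  set T : E → E := fun w => z - G w with hT
  have hTmaps : Set.MapsTo T S S := by
    intro w hw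
    rw [hS, mem_closedBall_iff_norm]
    have : T w - z = -(G w) := by simp [hT]
    rw [this, norm_neg]
    exact hGb w (hSr hw)
  have hTlip : ∀ a ∈ S, ∀ b ∈ S, dist (T a) (T b) ≤ (1/2 : ℝ) * dist a b := by
    intro a ha b hb
    rw [dist_eq_norm, dist_eq_norm]
    have h1 : T a - T b = G b - G a := by simp only [hT]; abel
    rw [h1]
    have h2 : ‖G b - G a‖ ≤ dg / (2 * δ) * ‖b - a‖ :=
      aux_lip (by linarith) hGdiff hGb (hSsub ha) (hSsub hb)
    have h3 : dg / (2 * δ) ≤ 1/2 := by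
      rw [div_le_iff₀ (by linarith)]; linarith
    have h4 : ‖b - a‖ = ‖a - b‖ := norm_sub_rev _ _
    nlinarith [norm_nonneg (a - b), norm_nonneg (b - a)]
  have hlipOn : LipschitzOnWith (1/2 : ℝ≥0) T S := by
    apply LipschitzOnWith.of_dist_le_mul
    intro a ha b hb
    simpa using hTlip a ha b hb
  have hcontr : ContractingWith (1/2 : ℝ≥0) (hTmaps.restrict T S S) := by
    constructor
    · rw [← NNReal.coe_lt_coe]; norm_num
    · exact (Set.MapsTo.lipschitzOnWith_iff_restrict hTmaps).mp hlipOn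
  have hzS : z ∈ S := by simp [hS, hdg0]
  obtain ⟨y, hyS, hyfix, -⟩ :=
    hcontr.exists_fixedPoint' (Metric.isClosed_closedBall.isComplete) hTmaps hzS (edist_ne_top _ _)
  refine ⟨y, mem_closedBall_iff_norm.mp hyS, ?_⟩
  have h1 : T y = y := hyfix
  have h2 : z - (g y - y) = y := h1
  have h3 : z - g y = 0 := by
    have h4 : z - (g y - y) - y = 0 := sub_eq_zero.mpr h2
    calc z - g y = z - (g y - y) - y := by abel
      _ = 0 := h4
  exact (sub_eq_zero.mp h3).symm


set_option maxHeartbeats 1000000 in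
/-- Loray–Rebelo/Ghys commutator estimate: if `f, g` are injective holomorphic maps on
`B_0(r) ⊂ ℂ^d` at `C⁰`-distance at most `δ` from the identity, and `4δ + τ < r`, then
the commutator `[f,g] = f ∘ g ∘ f⁻¹ ∘ g⁻¹` is defined on `B_0(r - 4δ - τ)` and is at
`C⁰`-distance at most `(2/τ)‖f - id‖ ‖g - id‖` from the identity. -/
theorem stmt_6 {d : ℕ} (r δ τ δf δg : ℝ)
    (hr0 : 0 < r) (hr1 : r < 1) (hδ0 : 0 < δ) (hδ1 : δ < 1) (hτ0 : 0 < τ) (hτ1 : τ < 1)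
    (hsum : 4 * δ + τ < r)
    (f g : EuclideanSpace ℂ (Fin d) → EuclideanSpace ℂ (Fin d))
    (hf : DifferentiableOn ℂ f (ball 0 r)) (hg : DifferentiableOn ℂ g (ball 0 r))
    (hfinj : Set.InjOn f (ball 0 r)) (hginj : Set.InjOn g (ball 0 r))
    (hfδ : ∀ z ∈ ball (0 : EuclideanSpace ℂ (Fin d)) r, ‖f z - z‖ ≤ δf)
    (hgδ : ∀ z ∈ ball (0 : EuclideanSpace ℂ (Fin d)) r, ‖g z - z‖ ≤ δg)
    (hδf : δf ≤ δ) (hδg : δg ≤ δ) :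
    ∀ z ∈ ball (0 : EuclideanSpace ℂ (Fin d)) (r - 4 * δ - τ),
      ∃ w₁ ∈ ball (0 : EuclideanSpace ℂ (Fin d)) r,
        ∃ w₂ ∈ ball (0 : EuclideanSpace ℂ (Fin d)) r,
          g w₁ = z ∧ f w₂ = w₁ ∧ g w₂ ∈ ball (0 : EuclideanSpace ℂ (Fin d)) r ∧
          ‖f (g w₂) - z‖ ≤ 2 / τ * δf * δg := by
  intro z hz
  rw [mem_ball_zero_iff] at hz
  have hδf0 : 0 ≤ δf := (norm_nonneg _).trans (hfδ 0 (mem_ball_self hr0))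
  have hδg0 : 0 ≤ δg := (norm_nonneg _).trans (hgδ 0 (mem_ball_self hr0))
  -- find w₁ with g w₁ = z
  obtain ⟨w₁, hw₁d, hw₁⟩ := aux_surj hδ0 hg hgδ hδg (z := z) (by linarith)
  have hw₁n : ‖w₁‖ < r - 3 * δ - τ := by
    calc ‖w₁‖ = ‖(w₁ - z) + z‖ := by rw [sub_add_cancel]
      _ ≤ ‖w₁ - z‖ + ‖z‖ := norm_add_le _ _
      _ < r - 3 * δ - τ := by linarith
  -- find w₂ with f w₂ = w₁
  obtain ⟨w₂, hw₂d, hw₂⟩ := aux_surj hδ0 hf hfδ hδf (z := w₁) (by linarith)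
  have hw₂n : ‖w₂‖ < r - 2 * δ - τ := by
    calc ‖w₂‖ = ‖(w₂ - w₁) + w₁‖ := by rw [sub_add_cancel]
      _ ≤ ‖w₂ - w₁‖ + ‖w₁‖ := norm_add_le _ _
      _ < r - 2 * δ - τ := by linarith
  have hw₂r : w₂ ∈ ball (0 : EuclideanSpace ℂ (Fin d)) r := by
    rw [mem_ball_zero_iff]; linarith
  have hgw₂n : ‖g w₂‖ < r - δ - τ := by
    have := hgδ w₂ hw₂r
    calc ‖g w₂‖ = ‖(g w₂ - w₂) + w₂‖ := by rw [sub_add_cancel]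
      _ ≤ ‖g w₂ - w₂‖ + ‖w₂‖ := norm_add_le _ _
      _ < r - δ - τ := by linarith
  have hgw₂r : g w₂ ∈ ball (0 : EuclideanSpace ℂ (Fin d)) r := by
    rw [mem_ball_zero_iff]; linarith
  refine ⟨w₁, by rw [mem_ball_zero_iff]; linarith, w₂, hw₂r, hw₁, hw₂, hgw₂r, ?_⟩
  -- the estimate
  set F : EuclideanSpace ℂ (Fin d) → EuclideanSpace ℂ (Fin d) := fun w => f w - w with hF
  set G : EuclideanSpace ℂ (Fin d) → EuclideanSpace ℂ (Fin d) := fun w => g w - w with hG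
  have hFdiff : DifferentiableOn ℂ F (ball 0 r) := hf.sub differentiableOn_id
  have hGdiff : DifferentiableOn ℂ G (ball 0 r) := hg.sub differentiableOn_id
  have hmem1 : w₂ ∈ ball (0 : EuclideanSpace ℂ (Fin d)) (r - τ) := by
    rw [mem_ball_zero_iff]; linarith
  have hmem2 : g w₂ ∈ ball (0 : EuclideanSpace ℂ (Fin d)) (r - τ) := by
    rw [mem_ball_zero_iff]; linarith
  have hmem3 : f w₂ ∈ ball (0 : EuclideanSpace ℂ (Fin d)) (r - τ) := by
    rw [hw₂, mem_ball_zero_iff]; linarith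
  have e1 : ‖F (g w₂) - F w₂‖ ≤ δf / τ * ‖g w₂ - w₂‖ :=
    aux_lip hτ0 hFdiff hfδ hmem1 hmem2
  have e2 : ‖G (f w₂) - G w₂‖ ≤ δg / τ * ‖f w₂ - w₂‖ :=
    aux_lip hτ0 hGdiff hgδ hmem1 hmem3
  have b1 : ‖g w₂ - w₂‖ ≤ δg := hgδ w₂ hw₂r
  have b2 : ‖f w₂ - w₂‖ ≤ δf := hfδ w₂ hw₂r
  have key : f (g w₂) - z = (F (g w₂) - F w₂) - (G (f w₂) - G w₂) := by
    rw [← hw₁, ← hw₂]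
    simp only [hF, hG]
    abel
  rw [key]
  have hτ' : 0 ≤ δf / τ := div_nonneg hδf0 hτ0.le
  have hτ'' : 0 ≤ δg / τ := div_nonneg hδg0 hτ0.le
  calc ‖(F (g w₂) - F w₂) - (G (f w₂) - G w₂)‖
      ≤ ‖F (g w₂) - F w₂‖ + ‖G (f w₂) - G w₂‖ := norm_sub_le _ _
    _ ≤ δf / τ * δg + δg / τ * δf := by
        have t1 : ‖F (g w₂) - F w₂‖ ≤ δf / τ * δg :=
          e1.trans (by nlinarith [norm_nonneg (g w₂ - w₂)])
        have t2 : ‖G (f w₂) - G w₂‖ ≤ δg / τ * δf :=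
          e2.trans (by nlinarith [norm_nonneg (f w₂ - w₂)])
        linarith
    _ ≤ 2 / τ * δf * δg := by
        rw [div_mul_eq_mul_div, div_mul_eq_mul_div, div_mul_eq_mul_div, div_mul_eq_mul_div]
        rw [← add_div, div_le_div_iff₀ hτ0 hτ0]
        ring_nf
        nlinarith [hτ0]
end

section
/- Let $0 < \varepsilon \leq 1$ and let $\gamma_1, \ldots, \gamma_k : B_0(\varepsilon) \to \mathbb{C}^d$ be injective holomorphic maps with holomorphic inverses such that $\|\gamma_i^{\pm 1} - \mathrm{id}\|_{C^0(B_0(\varepsilon))} \leq \varepsilon/32$ for all $i$. Define $S^{(0)}$ to be the set of the $\gamma_i$ and their inverses, and inductively $S^{(n+1)} = [S^{(n)}, S^{(n)}]$ (mutual commutators, omitting trivial ones). Then for every $n \geq 0$ and every $\gamma \in S^{(n)}$, the domain of $\gamma$ contains the ball $B_0(\varepsilon/2)$ and $\|\gamma - \mathrm{id}\|_{C^0(B_0(\varepsilon/2))} \leq \frac{\varepsilon}{2^n \cdot 32}$. -/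
open Metric

/-- Formal iterated commutators: elements of `IterComm k n` are the elements of the
`n`-th "derived set" `S⁽ⁿ⁾` built from `k` generators and their inverses (`S⁽⁰⁾`),
with `S⁽ⁿ⁺¹⁾ = [S⁽ⁿ⁾, S⁽ⁿ⁾]`. -/
inductive IterComm (k : ℕ) : ℕ → Type
  | base : Fin k → Bool → IterComm k 0
  | comm {n : ℕ} : IterComm k n → IterComm k n → IterComm k (n + 1)

/-- Realize a formal iterated commutator as a partially defined map of `ℂ^d`,
using composition of partial bijections (so domains shrink appropriately):
`comm f g` is realized as `f ∘ g ∘ f⁻¹ ∘ g⁻¹`. -/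
noncomputable def IterComm.realize {k d n : ℕ}
    (γ : Fin k → PartialEquiv (EuclideanSpace ℂ (Fin d)) (EuclideanSpace ℂ (Fin d))) :
    IterComm k n → PartialEquiv (EuclideanSpace ℂ (Fin d)) (EuclideanSpace ℂ (Fin d))
  | .base i b => if b then γ i else (γ i).symm
  | .comm a b =>
      (b.realize γ).symm.trans (((a.realize γ).symm).trans ((b.realize γ).trans (a.realize γ)))

theorem key_lipschitz {E : Type*} [NormedAddCommGroup E] [NormedSpace ℂ E] [CompleteSpace E]
    {h : E → E} {R τ C : ℝ} (hC : 0 ≤ C)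
    (hd : DifferentiableOn ℂ h (ball 0 R))
    (hb : ∀ z ∈ ball (0 : E) R, ‖h z‖ ≤ C)
    {x y : E} (hx : x ∈ ball (0 : E) (R - τ)) (hy : y ∈ ball (0 : E) (R - τ))
    (hxy : ‖y - x‖ < τ) :
    ‖h y - h x‖ ≤ C * ‖y - x‖ / (τ - ‖y - x‖) := by
  rcases eq_or_ne y x with rfl | hne
  · simpa using by positivity
  set v := y - x with hv
  have hvpos : 0 < ‖v‖ := by simpa [hv, sub_eq_zero] using hne
  have hxn : ‖x‖ < R - τ := by simpa using hx
  have hτpos : 0 < τ := lt_of_le_of_lt (norm_nonneg v) hxy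
  set ψ : ℂ → E := fun t => h (x + t • v) with hψ
  obtain ⟨ρ, hρ⟩ : ∃ ρ : ℝ, ρ = (R - ‖x‖) / ‖v‖ := ⟨_, rfl⟩
  have hρτ : τ / ‖v‖ < ρ := by
    rw [div_lt_iff₀ hvpos, hρ, div_mul_cancel₀ _ hvpos.ne']
    linarith
  have hmaps : ∀ t : ℂ, t ∈ ball (0 : ℂ) ρ → x + t • v ∈ ball (0 : E) R := by
    intro t ht
    simp only [mem_ball, dist_zero_right] at ht ⊢
    calc ‖x + t • v‖ ≤ ‖x‖ + ‖t‖ * ‖v‖ := by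
          simpa [norm_smul] using norm_add_le x (t • v)
      _ < ‖x‖ + ρ * ‖v‖ := by gcongr
      _ = R := by rw [hρ]; field_simp; ring
  have hdiffψ : DifferentiableOn ℂ ψ (ball (0 : ℂ) ρ) := by
    apply hd.comp
    · exact ((differentiable_id.smul_const v).const_add x).differentiableOn
    · exact hmaps
  obtain ⟨R₁, hR₁⟩ : ∃ R₁ : ℝ, R₁ = τ / ‖v‖ - 1 := ⟨_, rfl⟩
  have hvτ : ‖v‖ < τ := hxy
  have hone : (1 : ℝ) < τ / ‖v‖ := (one_lt_div hvpos).mpr hvτ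
  have hR₁pos : 0 < R₁ := by rw [hR₁]; linarith
  have hsub : ∀ s : ℝ, s ∈ Set.Icc (0:ℝ) 1 → closedBall ((s : ℝ) : ℂ) R₁ ⊆ ball (0 : ℂ) ρ := by
    intro s hs t ht
    simp only [mem_closedBall, dist_eq_norm] at ht
    simp only [mem_ball, dist_zero_right]
    have h1 : ‖t‖ - ‖((s:ℝ):ℂ)‖ ≤ ‖t - ((s:ℝ):ℂ)‖ := norm_sub_norm_le _ _
    have h2 : ‖((s:ℝ):ℂ)‖ ≤ 1 := by
      simpa [abs_of_nonneg hs.1] using hs.2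
    have h3 : R₁ + 1 = τ / ‖v‖ := by rw [hR₁]; ring
    exact lt_of_le_of_lt (by linarith) hρτ
  have hderiv : ∀ s : ℝ, s ∈ Set.Icc (0:ℝ) 1 → ‖deriv ψ ((s:ℝ) : ℂ)‖ ≤ C / R₁ := by
    intro s hs
    apply Complex.norm_deriv_le_of_forall_mem_sphere_norm_le hR₁pos
    · exact hdiffψ.diffContOnCl_ball (hsub s hs)
    · intro z hz
      exact hb _ (hmaps z (hsub s hs (sphere_subset_closedBall hz)))
  set g : ℝ → E := fun s => ψ ((s : ℝ) : ℂ) with hg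
  have hgderiv : ∀ s ∈ Set.Icc (0:ℝ) 1,
      HasDerivWithinAt g (deriv ψ ((s:ℝ):ℂ)) (Set.Icc 0 1) s := by
    intro s hs
    have hmem : ((s:ℝ):ℂ) ∈ ball (0:ℂ) ρ := by
      simp only [mem_ball, dist_zero_right]
      calc ‖((s:ℝ):ℂ)‖ = |s| := by simp
        _ ≤ 1 := by rw [abs_of_nonneg hs.1]; exact hs.2
        _ < τ / ‖v‖ := hone
        _ < ρ := hρτ
    have hψs : HasDerivAt ψ (deriv ψ ((s:ℝ):ℂ)) ((s:ℝ):ℂ) :=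
      (hdiffψ.differentiableAt (isOpen_ball.mem_nhds hmem)).hasDerivAt
    have := hψs.scomp (h := fun y : ℝ => ((y : ℝ) : ℂ)) (x := s)
      (by exact Complex.ofRealCLM.hasDerivAt)
    have h2 := this.hasDerivWithinAt (s := Set.Icc 0 1)
    simp only [Complex.ofRealCLM_apply, Complex.ofReal_one, one_smul] at h2
    exact h2
  have key := norm_image_sub_le_of_norm_deriv_le_segment' hgderiv
    (fun s hs => hderiv s (Set.Ico_subset_Icc_self hs)) 1 (by norm_num)
  have hg1 : g 1 = h y := by simp [hg, hψ, hv]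
  have hg0 : g 0 = h x := by simp [hg, hψ]
  rw [hg1, hg0] at key
  calc ‖h y - h x‖ ≤ C / R₁ * (1 - 0) := key
    _ = C * ‖v‖ / (τ - ‖v‖) := by
        rw [hR₁]
        field_simp
        ring

/-- Formal inverse of an iterated commutator. -/
def IterComm.inv {k : ℕ} : ∀ {n : ℕ}, IterComm k n → IterComm k n
  | _, .base i b => .base i (!b)
  | _, .comm a b => .comm b a

lemma IterComm.realize_inv {k d n : ℕ}
    (γ : Fin k → PartialEquiv (EuclideanSpace ℂ (Fin d)) (EuclideanSpace ℂ (Fin d)))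
    (w : IterComm k n) :
    (w.inv.realize γ) = (w.realize γ).symm := by
  cases w with
  | base i b => cases b <;> simp [realize, inv]
  | comm a b =>
    simp [realize, inv, PartialEquiv.trans_symm_eq_symm_trans_symm,
      PartialEquiv.symm_symm, PartialEquiv.trans_assoc]

theorem stmt_7' {k d : ℕ} (ε : ℝ) (hε0 : 0 < ε) (hε1 : ε ≤ 1)
    (γ : Fin k → PartialEquiv (EuclideanSpace ℂ (Fin d)) (EuclideanSpace ℂ (Fin d)))
    (hsource : ∀ i, (γ i).source = ball 0 ε)
    (htarget : ∀ i, ball (0 : EuclideanSpace ℂ (Fin d)) ε ⊆ (γ i).target)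
    (hhol : ∀ i, DifferentiableOn ℂ (γ i) (ball 0 ε))
    (hholinv : ∀ i, DifferentiableOn ℂ (γ i).symm (γ i).target)
    (hclose : ∀ i, ∀ z ∈ ball (0 : EuclideanSpace ℂ (Fin d)) ε, ‖γ i z - z‖ ≤ ε / 32)
    (hcloseinv : ∀ i, ∀ z ∈ ball (0 : EuclideanSpace ℂ (Fin d)) ε,
      ‖(γ i).symm z - z‖ ≤ ε / 32) :
    ∀ (n : ℕ) (w : IterComm k n),
      ball (0 : EuclideanSpace ℂ (Fin d)) (ε / 2 + ε / 2 ^ (n + 1)) ⊆ (w.realize γ).source ∧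
      DifferentiableOn ℂ (w.realize γ)
        (ball (0 : EuclideanSpace ℂ (Fin d)) (ε / 2 + ε / 2 ^ (n + 1))) ∧
      ∀ z ∈ ball (0 : EuclideanSpace ℂ (Fin d)) (ε / 2 + ε / 2 ^ (n + 1)),
        ‖w.realize γ z - z‖ ≤ ε / (2 ^ n * 32) := by
  intro n
  induction n with
  | zero =>
    intro w
    have hrad : ε / 2 + ε / 2 ^ (0 + 1) = ε := by norm_num
    have hbound : ε / ((2:ℝ) ^ 0 * 32) = ε / 32 := by norm_num
    rw [hrad, hbound]
    cases w with
    | base i b =>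
      cases b with
      | true =>
        refine ⟨?_, ?_, ?_⟩
        · simp only [IterComm.realize, if_true]
          rw [hsource i]
        · simpa only [IterComm.realize, if_true] using hhol i
        · simpa only [IterComm.realize, if_true] using hclose i
      | false =>
        refine ⟨?_, ?_, ?_⟩
        · simp only [IterComm.realize, Bool.false_eq_true, if_false, PartialEquiv.symm_source]
          exact htarget i
        · simpa only [IterComm.realize, Bool.false_eq_true, if_false]
            using (hholinv i).mono (htarget i)
        · simpa only [IterComm.realize, Bool.false_eq_true, if_false] using hcloseinv i
  | succ n ih =>
    intro w
    cases w with
    | comm a b =>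
      obtain ⟨hAs, hAd, hAb⟩ := ih a
      obtain ⟨hBs, hBd, hBb⟩ := ih b
      have hIA := ih a.inv
      rw [IterComm.realize_inv] at hIA
      obtain ⟨hAs', hAd', hAb'⟩ := hIA
      have hIB := ih b.inv
      rw [IterComm.realize_inv] at hIB
      obtain ⟨hBs', hBd', hBb'⟩ := hIB
      set A := a.realize γ with hA
      set B := b.realize γ with hB
      obtain ⟨δ, hδ⟩ : ∃ δ : ℝ, δ = ε / (2 ^ n * 32) := ⟨_, rfl⟩
      obtain ⟨r, hr⟩ : ∃ r : ℝ, r = ε / 2 + ε / 2 ^ (n + 1) := ⟨_, rfl⟩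
      have hδpos : 0 < δ := by rw [hδ]; positivity
      have hrpos : 0 < r := by rw [hr]; positivity
      have hrad : ε / 2 + ε / 2 ^ (n + 1 + 1) = r - 8 * δ := by
        rw [hr, hδ]
        ring
      have hbound2 : ε / ((2:ℝ) ^ (n + 1) * 32) = δ / 2 := by
        rw [hδ]
        ring
      rw [hrad, hbound2]
      rw [← hδ] at hAb hBb hAb' hBb'
      rw [← hr] at hAs hBs hAs' hBs' hAd hBd hAd' hBd' hAb hBb hAb' hBb'
      -- step estimates
      have sub8 : ball (0 : EuclideanSpace ℂ (Fin d)) (r - 8*δ) ⊆ ball (0 : EuclideanSpace ℂ (Fin d)) r := ball_subset_ball (by linarith)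
      have sub7 : ball (0 : EuclideanSpace ℂ (Fin d)) (r - 7*δ) ⊆ ball (0 : EuclideanSpace ℂ (Fin d)) r := ball_subset_ball (by linarith)
      have sub6 : ball (0 : EuclideanSpace ℂ (Fin d)) (r - 6*δ) ⊆ ball (0 : EuclideanSpace ℂ (Fin d)) r := ball_subset_ball (by linarith)
      have sub5 : ball (0 : EuclideanSpace ℂ (Fin d)) (r - 5*δ) ⊆ ball (0 : EuclideanSpace ℂ (Fin d)) r := ball_subset_ball (by linarith)
      have step : ∀ (m : ℝ) (f : EuclideanSpace ℂ (Fin d) → EuclideanSpace ℂ (Fin d)), (∀ p ∈ ball (0 : EuclideanSpace ℂ (Fin d)) r, ‖f p - p‖ ≤ δ) →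
          ∀ z ∈ ball (0 : EuclideanSpace ℂ (Fin d)) (r - (m+1)*δ), (m ≥ 0) → z ∈ ball (0 : EuclideanSpace ℂ (Fin d)) r →
          f z ∈ ball (0 : EuclideanSpace ℂ (Fin d)) (r - m*δ) := by
        intro m f hf z hz hm hzr
        have h1 := hf z hzr
        simp only [mem_ball, dist_zero_right] at hz ⊢
        have : ‖f z‖ ≤ ‖f z - z‖ + ‖z‖ := by
          simpa using norm_add_le (f z - z) z
        nlinarith
      have hz1 : ∀ z ∈ ball (0 : EuclideanSpace ℂ (Fin d)) (r - 8*δ),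
          B.symm z ∈ ball (0 : EuclideanSpace ℂ (Fin d)) (r - 7*δ) ∧ ‖B.symm z - z‖ ≤ δ := by
        intro z hz
        have hzr := sub8 hz
        refine ⟨step 7 B.symm hBb' z ?_ (by norm_num) hzr, hBb' z hzr⟩
        exact ball_subset_ball (by linarith) hz
      have hw : ∀ z1 ∈ ball (0 : EuclideanSpace ℂ (Fin d)) (r - 7*δ),
          A.symm z1 ∈ ball (0 : EuclideanSpace ℂ (Fin d)) (r - 6*δ) ∧ ‖A.symm z1 - z1‖ ≤ δ := by
        intro z1 h1
        have hzr := sub7 h1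
        exact ⟨step 6 A.symm hAb' z1 (by rw [(by norm_num : r - (6+1)*δ = r - 7*δ)]; exact h1) (by norm_num) hzr, hAb' z1 hzr⟩
      have hu : ∀ p ∈ ball (0 : EuclideanSpace ℂ (Fin d)) (r - 6*δ),
          B p ∈ ball (0 : EuclideanSpace ℂ (Fin d)) (r - 5*δ) ∧ ‖B p - p‖ ≤ δ := by
        intro p hp
        have hzr := sub6 hp
        exact ⟨step 5 B hBb p (by rw [(by norm_num : r - (5+1)*δ = r - 6*δ)]; exact hp) (by norm_num) hzr, hBb p hzr⟩
      -- values of the realization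
      have happ : ∀ z : EuclideanSpace ℂ (Fin d), ((IterComm.comm a b).realize γ) z = A (B (A.symm (B.symm z))) := by
        intro z
        simp [IterComm.realize, PartialEquiv.trans_apply, ← hA, ← hB]
      refine ⟨?_, ?_, ?_⟩
      · -- source
        intro z hz
        have h1 := hz1 z hz
        have h2 := hw _ h1.1
        have h3 := hu _ h2.1
        simp only [IterComm.realize, PartialEquiv.trans_source, Set.mem_inter_iff,
          Set.mem_preimage, PartialEquiv.coe_trans, Function.comp_apply, ← hA, ← hB]
        exact ⟨hBs' (sub8 hz), hAs' (sub7 h1.1), hBs (sub6 h2.1), hAs (sub5 h3.1)⟩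
      · -- differentiability
        have m1 : Set.MapsTo B.symm (ball (0 : EuclideanSpace ℂ (Fin d)) (r - 8*δ)) (ball (0 : EuclideanSpace ℂ (Fin d)) (r - 7*δ)) :=
          fun z hz => (hz1 z hz).1
        have m2 : Set.MapsTo A.symm (ball (0 : EuclideanSpace ℂ (Fin d)) (r - 7*δ)) (ball (0 : EuclideanSpace ℂ (Fin d)) (r - 6*δ)) :=
          fun z h => (hw z h).1
        have m3 : Set.MapsTo B (ball (0 : EuclideanSpace ℂ (Fin d)) (r - 6*δ)) (ball (0 : EuclideanSpace ℂ (Fin d)) (r - 5*δ)) :=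
          fun z h => (hu z h).1
        have d1 : DifferentiableOn ℂ B.symm (ball (0 : EuclideanSpace ℂ (Fin d)) (r - 8*δ)) := hBd'.mono sub8
        have d2 : DifferentiableOn ℂ (A.symm ∘ B.symm) (ball (0 : EuclideanSpace ℂ (Fin d)) (r - 8*δ)) :=
          (hAd'.mono sub7).comp d1 m1
        have d3 : DifferentiableOn ℂ (B ∘ A.symm ∘ B.symm) (ball (0 : EuclideanSpace ℂ (Fin d)) (r - 8*δ)) :=
          (hBd.mono sub6).comp d2 (m2.comp m1)
        have d4 : DifferentiableOn ℂ (A ∘ B ∘ A.symm ∘ B.symm) (ball (0 : EuclideanSpace ℂ (Fin d)) (r - 8*δ)) :=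
          (hAd.mono sub5).comp d3 ((m3.comp m2).comp m1)
        exact d4.congr (fun z _ => by simpa [Function.comp] using happ z)
      · -- bound
        intro z hz
        have h1 := hz1 z hz
        set z1 := B.symm z with hz1def
        have h2 := hw z1 h1.1
        set ww := A.symm z1 with hwdef
        have h3 := hu ww h2.1
        set u := B ww with hudef
        -- inversion identities
        have hz1t : z1 ∈ A.symm.source := hAs' (sub7 h1.1)
        have hAA : A ww = z1 := A.right_inv (by simpa using hz1t)
        have hzt : z ∈ B.symm.source := hBs' (sub8 hz)
        have hBz : B z1 = z := B.right_inv (by simpa using hzt)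
        -- key Lipschitz estimates
        have hmono : ∀ dd : ℝ, 0 ≤ dd → dd ≤ δ → δ * dd / (5*δ - dd) ≤ δ / 4 := by
          intro dd h0 h1
          rw [div_le_div_iff₀ (by linarith) (by norm_num)]
          nlinarith
        have hFd : DifferentiableOn ℂ (fun p => A p - p) (ball (0 : EuclideanSpace ℂ (Fin d)) r) :=
          hAd.sub differentiableOn_id
        have hGd : DifferentiableOn ℂ (fun p => B p - p) (ball (0 : EuclideanSpace ℂ (Fin d)) r) :=
          hBd.sub differentiableOn_id
        have hball5 : ∀ p ∈ ball (0 : EuclideanSpace ℂ (Fin d)) (r - 6*δ), p ∈ ball (0 : EuclideanSpace ℂ (Fin d)) (r - 5*δ) :=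
          fun p hp => ball_subset_ball (by linarith) hp
        have hkeyF : ‖(A u - u) - (A ww - ww)‖ ≤ δ / 4 := by
          have := key_lipschitz (h := fun p => A p - p) (R := r) (τ := 5*δ) (C := δ)
            hδpos.le hFd hAb (x := ww) (y := u)
            (by simpa using hball5 ww h2.1) (by simpa using h3.1)
            (lt_of_le_of_lt h3.2 (by linarith))
          refine le_trans this (hmono _ (norm_nonneg _) h3.2)
        have hkeyG : ‖(B z1 - z1) - (B ww - ww)‖ ≤ δ / 4 := by
          have hz1mem : z1 ∈ ball (0 : EuclideanSpace ℂ (Fin d)) (r - 5*δ) :=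
            ball_subset_ball (by linarith) h1.1
          have hd12 : ‖z1 - ww‖ ≤ δ := by
            rw [← norm_neg]
            simpa using h2.2
          have := key_lipschitz (h := fun p => B p - p) (R := r) (τ := 5*δ) (C := δ)
            hδpos.le hGd hBb (x := ww) (y := z1)
            (by simpa using hball5 ww h2.1) (by simpa using hz1mem)
            (lt_of_le_of_lt hd12 (by linarith))
          refine le_trans this (hmono _ (norm_nonneg _) hd12)
        -- algebraic identity
        have hval : ((IterComm.comm a b).realize γ) z = A u := by
          rw [happ z]
        have hidentity : A u - z = ((A u - u) - (A ww - ww)) - ((B z1 - z1) - (B ww - ww)) := by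
          rw [← hBz, hAA, ← hudef]
          abel
        rw [hval, hidentity]
        calc ‖((A u - u) - (A ww - ww)) - ((B z1 - z1) - (B ww - ww))‖
            ≤ ‖(A u - u) - (A ww - ww)‖ + ‖(B z1 - z1) - (B ww - ww)‖ := norm_sub_le _ _
          _ ≤ δ / 4 + δ / 4 := add_le_add hkeyF hkeyG
          _ = δ / 2 := by ring

/-- Common domain of definition: if the `k` injective holomorphic "seed" maps `γᵢ` and
their inverses are `ε/32`-close to the identity on `B_0(ε) ⊂ ℂ^d`, then every iterated
commutator `γ ∈ S⁽ⁿ⁾` is defined on `B_0(ε/2)` and satisfies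
`‖γ - id‖_{C⁰(B_0(ε/2))} ≤ ε/(2ⁿ · 32)`. -/
theorem stmt_7 {k d : ℕ} (ε : ℝ) (hε0 : 0 < ε) (hε1 : ε ≤ 1)
    (γ : Fin k → PartialEquiv (EuclideanSpace ℂ (Fin d)) (EuclideanSpace ℂ (Fin d)))
    (hsource : ∀ i, (γ i).source = ball 0 ε)
    (htarget : ∀ i, ball (0 : EuclideanSpace ℂ (Fin d)) ε ⊆ (γ i).target)
    (hhol : ∀ i, DifferentiableOn ℂ (γ i) (ball 0 ε))
    (hholinv : ∀ i, DifferentiableOn ℂ (γ i).symm (γ i).target)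
    (hclose : ∀ i, ∀ z ∈ ball (0 : EuclideanSpace ℂ (Fin d)) ε, ‖γ i z - z‖ ≤ ε / 32)
    (hcloseinv : ∀ i, ∀ z ∈ ball (0 : EuclideanSpace ℂ (Fin d)) ε,
      ‖(γ i).symm z - z‖ ≤ ε / 32) :
    ∀ (n : ℕ) (w : IterComm k n),
      ball (0 : EuclideanSpace ℂ (Fin d)) (ε / 2) ⊆ (w.realize γ).source ∧
      ∀ z ∈ ball (0 : EuclideanSpace ℂ (Fin d)) (ε / 2),
        ‖w.realize γ z - z‖ ≤ ε / (2 ^ n * 32) := by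
  intro n w
  obtain ⟨h1, _, h3⟩ := stmt_7' ε hε0 hε1 γ hsource htarget hhol hholinv hclose hcloseinv n w
  have hpos : 0 < ε / 2 ^ (n + 1) := by positivity
  have hsub : ball (0 : EuclideanSpace ℂ (Fin d)) (ε / 2) ⊆
      ball (0 : EuclideanSpace ℂ (Fin d)) (ε / 2 + ε / 2 ^ (n + 1)) :=
    ball_subset_ball (by linarith)
  exact ⟨hsub.trans h1, fun z hz => h3 z (hsub hz)⟩
end
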